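/- Let A, B ∈ M₂(ℂ) both be traceless and q ∈ ℝ. Then ‖AB − qBA‖_F² ≤ (1 + q²)‖A‖_F²‖B‖_F². -/

import Mathlib

open Matrix
open scoped BigOperators Matrix

noncomputable def frobSq (M : Matrix (Fin 2) (Fin 2) ℂ) : ℝ :=
  ∑ i, ∑ j, ‖M i j‖ ^ 2

theorem stmt_16 (A B : Matrix (Fin 2) (Fin 2) ℂ)
    (hA : A.trace = 0) (hB : B.trace = 0) (q : ℝ) :
    frobSq (A * B - (q : ℂ) • (B * A)) ≤ (1 + q ^ 2) * frobSq A * frobSq B := by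
  rw [Matrix.trace_fin_two] at hA hB
  have hA' : A 1 1 = - A 0 0 := by linear_combination hA
  have hB' : B 1 1 = - B 0 0 := by linear_combination hB
  simp only [frobSq, Fin.sum_univ_two, Matrix.sub_apply, Matrix.smul_apply,
    Matrix.mul_apply, Fin.sum_univ_two, hA', hB', Complex.sq_norm,
    Complex.normSq_apply, smul_eq_mul]
  simp only [Complex.add_re, Complex.add_im, Complex.mul_re, Complex.mul_im,
    Complex.sub_re, Complex.sub_im, Complex.neg_re, Complex.neg_im,
    Complex.ofReal_re, Complex.ofReal_im]
  set a1 := (A 0 0).re; set a2 := (A 0 0).im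
  set b1 := (A 0 1).re; set b2 := (A 0 1).im
  set c1 := (A 1 0).re; set c2 := (A 1 0).im
  set d1 := (B 0 0).re; set d2 := (B 0 0).im
  set e1 := (B 0 1).re; set e2 := (B 0 1).im
  set f1 := (B 1 0).re; set f2 := (B 1 0).im
  set_option maxHeartbeats 1000000 in
  linarith [sq_nonneg ((1-q)*(b1*e1+b2*e2-c1*f1-c2*f2)),
    sq_nonneg ((1-q)*(b2*e1-b1*e2-c2*f1+c1*f2)),
    sq_nonneg ((1-q)*(b1*d1+b2*d2-a1*f1-a2*f2)),
    sq_nonneg ((1-q)*(b2*d1-b1*d2-a2*f1+a1*f2)),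
    sq_nonneg ((1-q)*(c1*d1+c2*d2-a1*e1-a2*e2)),
    sq_nonneg ((1-q)*(c2*d1-c1*d2-a2*e1+a1*e2)),
    sq_nonneg ((1+q)*(2*(a1*d1+a2*d2)+b1*e1+b2*e2+c1*f1+c2*f2)),
    sq_nonneg ((1+q)*(2*(a2*d1-a1*d2)+b2*e1-b1*e2+c2*f1-c1*f2))]
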